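/- Let A = k⟨x, y⟩/(xy, y²) with deg x = deg y = 1. Then: (1) A is a connected GPerm algebra; (2) the Hilbert series of A is 1 + 2t/(1−t); (3) the set of elements annihilated on the left by A_{≥n} for some n (left torsion) equals the span of {y x^i : i ≥ 0}, which is infinite dimensional; (4) the center of A is k. -/

import Mathlib

noncomputable section

/-- The relations `xy = 0`, `y² = 0` in the free algebra `k⟨x,y⟩`
(generator `0` is `x`, generator `1` is `y`). -/
inductive Rel14 (k : Type) [Field k] :
    FreeAlgebra k (Fin 2) → FreeAlgebra k (Fin 2) → Prop
  | xy : Rel14 k (FreeAlgebra.ι k 0 * FreeAlgebra.ι k 1) 0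
  | yy : Rel14 k (FreeAlgebra.ι k 1 * FreeAlgebra.ι k 1) 0

/-- `A = k⟨x,y⟩/(xy, y²)`. -/
abbrev A14 (k : Type) [Field k] := RingQuot (Rel14 k)

/-- The images of the generators `x, y` in `A`. -/
def G14 (k : Type) [Field k] : Fin 2 → A14 k :=
  fun i => RingQuot.mkAlgHom k (Rel14 k) (FreeAlgebra.ι k i)

/-- The degree-`m` component of `A` (span of the images of words of length `m`,
as `deg x = deg y = 1`). -/
def W14 (k : Type) [Field k] (m : ℕ) : Submodule k (A14 k) :=
  Submodule.span k {q | ∃ l : List (Fin 2), l.length = m ∧ q = (l.map (G14 k)).prod}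

open Polynomial

@[ext] structure B14 (k : Type) [Field k] where
  a : Polynomial k
  b : Polynomial k

namespace B14

variable {k : Type} [Field k]

instance : Zero (B14 k) := ⟨⟨0, 0⟩⟩
instance : Add (B14 k) := ⟨fun x y => ⟨x.a + y.a, x.b + y.b⟩⟩
instance : Neg (B14 k) := ⟨fun x => ⟨-x.a, -x.b⟩⟩
instance : One (B14 k) := ⟨⟨1, 0⟩⟩
instance : Mul (B14 k) := ⟨fun x y => ⟨x.a * y.a, C (x.a.coeff 0) * y.b + x.b * y.a⟩⟩
instance : SMul k (B14 k) := ⟨fun c x => ⟨c • x.a, c • x.b⟩⟩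

@[simp] theorem zero_a : (0 : B14 k).a = 0 := rfl
@[simp] theorem zero_b : (0 : B14 k).b = 0 := rfl
@[simp] theorem add_a (x y : B14 k) : (x + y).a = x.a + y.a := rfl
@[simp] theorem add_b (x y : B14 k) : (x + y).b = x.b + y.b := rfl
@[simp] theorem neg_a (x : B14 k) : (-x).a = -x.a := rfl
@[simp] theorem neg_b (x : B14 k) : (-x).b = -x.b := rfl
@[simp] theorem one_a : (1 : B14 k).a = 1 := rfl
@[simp] theorem one_b : (1 : B14 k).b = 0 := rfl
@[simp] theorem mul_a (x y : B14 k) : (x * y).a = x.a * y.a := rfl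
@[simp] theorem mul_b (x y : B14 k) : (x * y).b = C (x.a.coeff 0) * y.b + x.b * y.a := rfl
@[simp] theorem smul_a (c : k) (x : B14 k) : (c • x).a = c • x.a := rfl
@[simp] theorem smul_b (c : k) (x : B14 k) : (c • x).b = c • x.b := rfl

instance : AddCommGroup (B14 k) where
  add_assoc x y z := by ext1 <;> simp [add_assoc]
  zero_add x := by ext1 <;> simp
  add_zero x := by ext1 <;> simp
  neg_add_cancel x := by ext1 <;> simp
  add_comm x y := by ext1 <;> simp [add_comm]
  nsmul := nsmulRec
  zsmul := zsmulRec

instance : Ring (B14 k) where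
  __ := (inferInstance : AddCommGroup (B14 k))
  left_distrib x y z := by ext1 <;> simp <;> ring
  right_distrib x y z := by ext1 <;> simp [map_add] <;> ring
  zero_mul x := by ext1 <;> simp
  mul_zero x := by ext1 <;> simp
  mul_assoc x y z := by ext1 <;> simp [Polynomial.mul_coeff_zero, map_mul] <;> ring
  one_mul x := by ext1 <;> simp
  mul_one x := by ext1 <;> simp

instance : Module k (B14 k) where
  one_smul x := by ext1 <;> simp
  mul_smul c d x := by ext1 <;> simp [mul_smul]
  smul_zero c := by ext1 <;> simp
  smul_add c x y := by ext1 <;> simp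
  add_smul c d x := by ext1 <;> simp [add_smul]
  zero_smul x := by ext1 <;> simp

instance : Algebra k (B14 k) :=
  Algebra.ofModule
    (fun r x y => by ext1 <;> simp [smul_mul_assoc, Polynomial.coeff_smul, Polynomial.smul_C,
      smul_add, Polynomial.smul_eq_C_mul, mul_assoc])
    (fun r x y => by ext1 <;> simp [mul_smul_comm, smul_add])

@[simp] theorem algebraMap_a (c : k) : (algebraMap k (B14 k) c).a = C c := by
  rw [Algebra.algebraMap_eq_smul_one]
  show c • (1 : Polynomial k) = C c
  rw [← Polynomial.algebraMap_eq, Algebra.algebraMap_eq_smul_one]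

@[simp] theorem algebraMap_b (c : k) : (algebraMap k (B14 k) c).b = 0 := by
  rw [Algebra.algebraMap_eq_smul_one]
  show c • (0 : Polynomial k) = 0
  simp

instance : Nontrivial (B14 k) :=
  ⟨0, 1, fun h => by simpa using congrArg B14.a h⟩

/-- inclusion of `k[x]` into `B14`. -/
def inlA : Polynomial k →ₐ[k] B14 k where
  toFun p := ⟨p, 0⟩
  map_one' := by ext1 <;> simp
  map_mul' p q := by ext1 <;> simp
  map_zero' := by ext1 <;> simp
  map_add' p q := by ext1 <;> simp
  commutes' c := by ext1 <;> simp

@[simp] theorem inlA_apply (p : Polynomial k) : (inlA p : B14 k) = ⟨p, 0⟩ := rfl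

end B14

section Maps

variable (k : Type) [Field k]

/-- the images of the generators in `B14`. -/
def g14 : Fin 2 → B14 k := ![⟨X, 0⟩, ⟨0, 1⟩]

theorem hrel14 : ∀ ⦃x y : FreeAlgebra k (Fin 2)⦄, Rel14 k x y →
    (FreeAlgebra.lift k (g14 k)) x = (FreeAlgebra.lift k (g14 k)) y := by
  rintro x y (h | h) <;>
    · simp only [map_mul, FreeAlgebra.lift_ι_apply, map_zero, g14]
      ext1 <;> simp

/-- the map `A14 → B14`. -/
def φ14 : A14 k →ₐ[k] B14 k :=
  RingQuot.liftAlgHom k ⟨FreeAlgebra.lift k (g14 k), hrel14 k⟩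

@[simp] theorem φ14_x : φ14 k (G14 k 0) = ⟨X, 0⟩ := by
  simp [φ14, G14, RingQuot.liftAlgHom_mkAlgHom_apply, g14]

@[simp] theorem φ14_y : φ14 k (G14 k 1) = ⟨0, 1⟩ := by
  simp [φ14, G14, RingQuot.liftAlgHom_mkAlgHom_apply, g14]

theorem hxy14 : G14 k 0 * G14 k 1 = 0 := by
  have := RingQuot.mkAlgHom_rel k (Rel14.xy (k := k))
  simpa [G14, map_mul] using this

theorem hyy14 : G14 k 1 * G14 k 1 = 0 := by
  have := RingQuot.mkAlgHom_rel k (Rel14.yy (k := k))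
  simpa [G14, map_mul] using this

theorem hxpow14 (n : ℕ) : (G14 k 0) ^ (n + 1) * G14 k 1 = 0 := by
  induction n with
  | zero => simpa using hxy14 k
  | succ n ih =>
    rw [pow_succ', mul_assoc, ih, mul_zero]

theorem haevaly14 (p : Polynomial k) :
    (Polynomial.aeval (G14 k 0) p) * G14 k 1 = (p.coeff 0) • G14 k 1 := by
  induction p using Polynomial.induction_on' with
  | add p q hp hq => rw [map_add, add_mul, hp, hq, Polynomial.coeff_add, add_smul]
  | monomial n c =>
    rw [Polynomial.aeval_monomial, Polynomial.coeff_monomial]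
    cases n with
    | zero =>
      simp [Algebra.algebraMap_eq_smul_one, smul_mul_assoc]
    | succ n =>
      rw [Algebra.algebraMap_eq_smul_one, smul_mul_assoc, one_mul, smul_mul_assoc,
        hxpow14 k n, smul_zero, if_neg (by omega), zero_smul]

/-- the map `B14 → A14`. -/
def ψ14 : B14 k →ₐ[k] A14 k where
  toFun w := Polynomial.aeval (G14 k 0) w.a + G14 k 1 * Polynomial.aeval (G14 k 0) w.b
  map_one' := by simp
  map_zero' := by simp
  map_add' u v := by
    simp only [B14.add_a, B14.add_b, map_add, mul_add]
    abel
  commutes' c := by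
    simp [Algebra.algebraMap_eq_smul_one, B14.algebraMap_a, B14.algebraMap_b,
      Polynomial.aeval_C]
  map_mul' u v := by
    simp only [B14.mul_a, B14.mul_b, map_add, map_mul, Polynomial.aeval_C]
    set P := Polynomial.aeval (G14 k 0) u.a
    set Q := Polynomial.aeval (G14 k 0) u.b
    set R := Polynomial.aeval (G14 k 0) v.a
    set S := Polynomial.aeval (G14 k 0) v.b
    set Y := G14 k 1
    have h1 : P * Y = (u.a.coeff 0) • Y := haevaly14 k u.a
    have h2 : Q * Y = (u.b.coeff 0) • Y := haevaly14 k u.b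
    have hALG : (algebraMap k (A14 k)) (u.a.coeff 0) = (u.a.coeff 0) • (1 : A14 k) :=
      Algebra.algebraMap_eq_smul_one _
    calc P * R + Y * ((algebraMap k (A14 k)) (u.a.coeff 0) * S + Q * R)
        = P * R + (u.a.coeff 0) • (Y * S) + Y * (Q * R) := by
          rw [hALG, mul_add, smul_mul_assoc, one_mul, mul_smul_comm]; abel
      _ = P * R + P * (Y * S) + ((Y * Q) * R + (Y * Q) * (Y * S)) := by
          rw [← mul_assoc P Y S, h1, smul_mul_assoc, mul_assoc Y Q R]
          have : (Y * Q) * (Y * S) = 0 := by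
            rw [mul_assoc Y Q (Y*S), ← mul_assoc Q Y S, h2, smul_mul_assoc, mul_smul_comm,
              ← mul_assoc Y Y S, hyy14 k, zero_mul, smul_zero]
          rw [this, add_zero]
      _ = (P + Y * Q) * (R + Y * S) := by rw [add_mul, mul_add, mul_add]

/-- the iso. -/
def e14 : A14 k ≃ₐ[k] B14 k :=
  AlgEquiv.ofAlgHom (φ14 k) (ψ14 k)
    (by
      refine AlgHom.ext fun w => ?_
      show φ14 k (Polynomial.aeval (G14 k 0) w.a + G14 k 1 * Polynomial.aeval (G14 k 0) w.b) = w
      rw [map_add, map_mul, ← Polynomial.aeval_algHom_apply, ← Polynomial.aeval_algHom_apply,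
        φ14_x, φ14_y]
      have ha : ∀ p : Polynomial k, Polynomial.aeval (⟨X, 0⟩ : B14 k) p = ⟨p, 0⟩ := by
        intro p
        have := Polynomial.aeval_algHom_apply (B14.inlA (k := k)) X p
        simpa [Polynomial.aeval_X_left_apply] using this
      rw [ha, ha]
      ext1 <;> simp
      )
    (by
      apply RingQuot.ringQuot_ext'
      apply FreeAlgebra.hom_ext
      funext i
      fin_cases i
      · show ψ14 k (φ14 k (G14 k 0)) = G14 k 0
        rw [φ14_x]
        show Polynomial.aeval (G14 k 0) X + G14 k 1 * Polynomial.aeval (G14 k 0) 0 = _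
        simp
      · show ψ14 k (φ14 k (G14 k 1)) = G14 k 1
        rw [φ14_y]
        show Polynomial.aeval (G14 k 0) 0 + G14 k 1 * Polynomial.aeval (G14 k 0) 1 = _
        simp)

@[simp] theorem e14_x : e14 k (G14 k 0) = ⟨X, 0⟩ := φ14_x k
@[simp] theorem e14_y : e14 k (G14 k 1) = ⟨0, 1⟩ := φ14_y k

end Maps

section Words

variable (k : Type) [Field k]

@[simp] theorem g14_0 : g14 k 0 = ⟨X, 0⟩ := rfl
@[simp] theorem g14_1 : g14 k 1 = ⟨0, 1⟩ := rfl

theorem eword (l : List (Fin 2)) :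
    e14 k ((l.map (G14 k)).prod) = (l.map (g14 k)).prod := by
  rw [map_list_prod, List.map_map]
  have : ⇑(e14 k) ∘ G14 k = g14 k := by
    funext i
    fin_cases i
    · simpa using e14_x k
    · simpa using e14_y k
  rw [this]

theorem mapW (m : ℕ) : Submodule.map (e14 k).toLinearMap (W14 k m) =
    Submodule.span k {w : B14 k | ∃ l : List (Fin 2), l.length = m ∧ w = (l.map (g14 k)).prod} := by
  rw [W14, Submodule.map_span]
  congr 1
  ext w
  constructor
  · rintro ⟨q, ⟨l, hl, rfl⟩, rfl⟩; exact ⟨l, hl, by simpa using eword k l⟩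
  · rintro ⟨l, hl, rfl⟩; exact ⟨_, ⟨l, hl, rfl⟩, by simpa using eword k l⟩

theorem L1 (l : List (Fin 2)) :
    (l.map (g14 k)).prod = 0 ∨ (l.map (g14 k)).prod = ⟨X ^ l.length, 0⟩ ∨
      (l.map (g14 k)).prod = ⟨0, X ^ (l.length - 1)⟩ := by
  induction l with
  | nil => right; left; ext1 <;> simp
  | cons i t ih =>
    rw [List.map_cons, List.prod_cons]
    fin_cases i
    · rcases ih with h | h | h
      · left; rw [h, mul_zero]
      · right; left; rw [h]
        show (⟨X, 0⟩ : B14 k) * _ = _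
        ext1 <;> simp [pow_succ']
      · left; rw [h]
        show (⟨X, 0⟩ : B14 k) * _ = 0
        ext1 <;> simp
    · rcases ih with h | h | h
      · left; rw [h, mul_zero]
      · right; right; rw [h]
        show (⟨0, 1⟩ : B14 k) * _ = _
        ext1 <;> simp
      · left; rw [h]
        show (⟨0, 1⟩ : B14 k) * _ = 0
        ext1 <;> simp

theorem L2a (m : ℕ) : ((List.replicate m (0 : Fin 2)).map (g14 k)).prod = ⟨X ^ m, 0⟩ := by
  induction m with
  | zero => ext1 <;> simp
  | succ n ih =>
    rw [List.replicate_succ, List.map_cons, List.prod_cons, ih, g14_0]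
    ext1 <;> simp [pow_succ']

theorem L2b (m : ℕ) :
    (((1 : Fin 2) :: List.replicate m (0 : Fin 2)).map (g14 k)).prod = ⟨0, X ^ m⟩ := by
  rw [List.map_cons, List.prod_cons, L2a, g14_1]
  ext1 <;> simp

theorem spanW (m : ℕ) (hm : 1 ≤ m) :
    Submodule.map (e14 k).toLinearMap (W14 k m) =
      Submodule.span k (Set.range ![(⟨X ^ m, 0⟩ : B14 k), ⟨0, X ^ (m - 1)⟩]) := by
  rw [mapW]
  apply le_antisymm
  · rw [Submodule.span_le]
    rintro w ⟨l, hl, rfl⟩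
    rcases L1 k l with h | h | h
    · rw [h]; exact Submodule.zero_mem _
    · rw [h, hl]; exact Submodule.subset_span ⟨0, rfl⟩
    · rw [h, hl]; exact Submodule.subset_span ⟨1, rfl⟩
  · rw [Submodule.span_le]
    rintro w ⟨i, rfl⟩
    fin_cases i
    · exact Submodule.subset_span ⟨List.replicate m 0, by simp, by rw [L2a]; rfl⟩
    · refine Submodule.subset_span ⟨(1 : Fin 2) :: List.replicate (m - 1) 0, by simp; omega,
        by rw [L2b]; rfl⟩

theorem li_pair (m : ℕ) (hm : 1 ≤ m) :
    LinearIndependent k ![(⟨X ^ m, 0⟩ : B14 k), ⟨0, X ^ (m - 1)⟩] := by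
  rw [LinearIndependent.pair_iff]
  intro s t hst
  have h1 : s • (X : Polynomial k) ^ m = 0 := by simpa using congrArg B14.a hst
  have h2 : t • (X : Polynomial k) ^ (m - 1) = 0 := by simpa using congrArg B14.b hst
  constructor
  · rcases smul_eq_zero.mp h1 with h | h
    · exact h
    · exact absurd h (pow_ne_zero _ Polynomial.X_ne_zero)
  · rcases smul_eq_zero.mp h2 with h | h
    · exact h
    · exact absurd h (pow_ne_zero _ Polynomial.X_ne_zero)

instance : Nontrivial (A14 k) := (e14 k).toEquiv.nontrivial

theorem finrankW0 : Module.finrank k (W14 k 0) = 1 := by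
  have : W14 k 0 = Submodule.span k {(1 : A14 k)} := by
    rw [W14]
    congr 1
    ext q
    constructor
    · rintro ⟨l, hl, rfl⟩
      rw [List.length_eq_zero_iff.mp hl]
      simp
    · rintro rfl
      exact ⟨[], rfl, rfl⟩
  rw [this, finrank_span_singleton (one_ne_zero)]

theorem finrankW (m : ℕ) (hm : 1 ≤ m) : Module.finrank k (W14 k m) = 2 := by
  have h := LinearEquiv.finrank_map_eq (e14 k).toLinearEquiv (W14 k m)
  have : Submodule.map (e14 k).toLinearMap (W14 k m) =
      Submodule.map ((e14 k).toLinearEquiv : A14 k →ₗ[k] B14 k) (W14 k m) := rfl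
  rw [← h, ← this, spanW k m hm, finrank_span_eq_card (li_pair k m hm)]
  simp

end Words

section Main

variable (k : Type) [Field k]

/-- first component, as a linear map. -/
def aL : B14 k →ₗ[k] Polynomial k where
  toFun w := w.a
  map_add' _ _ := rfl
  map_smul' _ _ := rfl

/-- second component inclusion, as a linear map. -/
def bL : Polynomial k →ₗ[k] B14 k where
  toFun s := ⟨0, s⟩
  map_add' _ _ := by ext1 <;> simp
  map_smul' _ _ := by ext1 <;> simp

theorem coeff0_of_memW (m : ℕ) (hm : 1 ≤ m) {a : A14 k} (ha : a ∈ W14 k m) :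
    ((e14 k) a).a.coeff 0 = 0 := by
  have hmem : (e14 k) a ∈ Submodule.map (e14 k).toLinearMap (W14 k m) :=
    Submodule.mem_map_of_mem ha
  rw [spanW k m hm] at hmem
  have hle : Submodule.span k (Set.range ![(⟨X ^ m, 0⟩ : B14 k), ⟨0, X ^ (m - 1)⟩]) ≤
      LinearMap.ker ((Polynomial.lcoeff k 0) ∘ₗ aL k) := by
    rw [Submodule.span_le]
    rintro w ⟨i, rfl⟩
    fin_cases i
    · simp only [LinearMap.mem_ker, LinearMap.comp_apply, Matrix.cons_val_zero]
      simp [aL, Polynomial.coeff_X_pow]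
      omega
    · simp [aL, LinearMap.mem_ker]
  simpa [aL] using hle hmem

theorem mulzero1 (u : B14 k) (hu : u.a.coeff 0 = 0) (v w : B14 k) :
    u * (v * w) = u * (w * v) := by
  ext1 <;> simp only [B14.mul_a, B14.mul_b, hu, Polynomial.C_0, map_zero, zero_mul, add_zero,
    zero_add] <;> ring

theorem mulzero2 (u v : B14 k) (hu : u.a.coeff 0 = 0) (hv : v.a = 0) : u * v = 0 := by
  ext1 <;> simp [hu, hv]

theorem heyx (i : ℕ) : e14 k (G14 k 1 * G14 k 0 ^ i) = ⟨0, X ^ i⟩ := by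
  rw [map_mul, map_pow, e14_x, e14_y]
  have hx : (⟨X, 0⟩ : B14 k) ^ i = ⟨X ^ i, 0⟩ := by
    have := map_pow (B14.inlA (k := k)) X i
    simpa using this.symm
  rw [hx]
  ext1 <;> simp

theorem span_X_pow_top :
    Submodule.span k (Set.range fun i : ℕ => (X : Polynomial k) ^ i) = ⊤ := by
  rw [eq_top_iff]
  intro p hp
  clear hp
  induction p using Polynomial.induction_on with
  | C a =>
    have : (C a : Polynomial k) = a • X ^ 0 := by
      rw [pow_zero, ← Polynomial.algebraMap_eq, Algebra.algebraMap_eq_smul_one]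
    rw [this]
    exact Submodule.smul_mem _ _ (Submodule.subset_span ⟨0, rfl⟩)
  | add p q hp hq => exact Submodule.add_mem _ hp hq
  | monomial n a _ =>
    have : (C a : Polynomial k) * X ^ (n + 1) = a • X ^ (n + 1) := by
      rw [Polynomial.smul_eq_C_mul]
    rw [this]
    exact Submodule.smul_mem _ _ (Submodule.subset_span ⟨n + 1, rfl⟩)

theorem spanYX :
    Submodule.span k (Set.range fun i : ℕ => (⟨0, X ^ i⟩ : B14 k)) = LinearMap.ker (aL k) := by
  apply le_antisymm
  · rw [Submodule.span_le]
    rintro w ⟨i, rfl⟩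
    simp [aL, LinearMap.mem_ker]
  · intro w hw
    have hwa : w.a = 0 := hw
    have hb : w.b ∈ Submodule.span k (Set.range fun i : ℕ => (X : Polynomial k) ^ i) := by
      rw [span_X_pow_top]; trivial
    have : bL k w.b ∈ Submodule.map (bL k)
        (Submodule.span k (Set.range fun i : ℕ => (X : Polynomial k) ^ i)) :=
      Submodule.mem_map_of_mem hb
    rw [Submodule.map_span, ← Set.range_comp] at this
    have hew : bL k w.b = w := by ext1 <;> simp [bL, hwa]
    rw [hew] at this
    exact this

theorem mapT : Submodule.map (e14 k).toLinearMap
      (Submodule.span k (Set.range fun i : ℕ => G14 k 1 * (G14 k 0) ^ i)) =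
    Submodule.span k (Set.range fun i : ℕ => (⟨0, X ^ i⟩ : B14 k)) := by
  rw [Submodule.map_span, ← Set.range_comp]
  have : ⇑(e14 k).toLinearMap ∘ (fun i : ℕ => G14 k 1 * (G14 k 0) ^ i) =
      fun i : ℕ => (⟨0, X ^ i⟩ : B14 k) := funext fun i => by simpa using heyx k i
  rw [this]

theorem liX : LinearIndependent k (fun i : ℕ => (X : Polynomial k) ^ i) := by
  have h := (Polynomial.basisMonomials k).linearIndependent
  have : (fun i : ℕ => (X : Polynomial k) ^ i) = ⇑(Polynomial.basisMonomials k) := by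
    funext n
    simp [Polynomial.coe_basisMonomials, Polynomial.X_pow_eq_monomial]
  rwa [this]

theorem liB : LinearIndependent k (fun i : ℕ => (⟨0, X ^ i⟩ : B14 k)) := by
  have hker : LinearMap.ker (bL k) = ⊥ := by
    rw [LinearMap.ker_eq_bot]
    intro s t h
    simpa [bL] using congrArg B14.b h
  have := (liX k).map' (bL k) hker
  have heq : ⇑(bL k) ∘ (fun i : ℕ => (X : Polynomial k) ^ i) =
      fun i : ℕ => (⟨0, X ^ i⟩ : B14 k) := by
    funext i; rfl
  rwa [heq] at this

theorem liA : LinearIndependent k (fun i : ℕ => G14 k 1 * (G14 k 0) ^ i) := by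
  apply LinearIndependent.of_comp (e14 k).toLinearMap
  have heq : ⇑(e14 k).toLinearMap ∘ (fun i : ℕ => G14 k 1 * (G14 k 0) ^ i) =
      fun i : ℕ => (⟨0, X ^ i⟩ : B14 k) := by
    funext i; simpa using heyx k i
  rw [heq]
  exact liB k

end Main

/-- For `A = k⟨x,y⟩/(xy, y²)` with `deg x = deg y = 1`:
(1) `A` is a (connected) GPerm algebra;
(2) its Hilbert series is `1 + 2t/(1-t)`, i.e. `dim A_0 = 1` and `dim A_m = 2`
    for `m ≥ 1`;
(3) the set of left torsion elements (killed on the left by `A_{≥N}` for some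
    `N`) is the span of `{y xⁱ : i ≥ 0}`, which is infinite dimensional;
(4) the center of `A` is `k`. -/
theorem stmt14 (k : Type) [Field k] :
    (∀ m, 1 ≤ m → ∀ a ∈ W14 k m, ∀ b c : A14 k, a * (b * c) = a * (c * b)) ∧
    (Module.finrank k (W14 k 0) = 1 ∧ ∀ m, 1 ≤ m → Module.finrank k (W14 k m) = 2) ∧
    ({w : A14 k | ∃ N : ℕ, ∀ m, N ≤ m → ∀ a ∈ W14 k m, a * w = 0}
      = (Submodule.span k (Set.range fun i : ℕ => G14 k 1 * (G14 k 0) ^ i) :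
          Submodule k (A14 k))) ∧
    (¬ FiniteDimensional k
      (Submodule.span k (Set.range fun i : ℕ => G14 k 1 * (G14 k 0) ^ i))) ∧
    Subalgebra.center k (A14 k) = ⊥ := by
  set T := Submodule.span k (Set.range fun i : ℕ => G14 k 1 * (G14 k 0) ^ i) with hT
  refine ⟨?_, ⟨finrankW0 k, finrankW k⟩, ?_, ?_, ?_⟩
  · -- GPerm
    intro m hm a ha b c
    apply (e14 k).injective
    rw [map_mul, map_mul, map_mul, map_mul]
    exact mulzero1 k _ (coeff0_of_memW k m hm ha) _ _
  · -- torsion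
    ext w
    simp only [Set.mem_setOf_eq, SetLike.mem_coe]
    constructor
    · rintro ⟨N, hN⟩
      have ha : ((List.replicate (N + 1) (0 : Fin 2)).map (G14 k)).prod ∈ W14 k (N + 1) :=
        Submodule.subset_span ⟨_, List.length_replicate, rfl⟩
      have h0 := hN (N + 1) (by omega) _ ha
      have he : e14 k (((List.replicate (N + 1) (0 : Fin 2)).map (G14 k)).prod) * e14 k w = 0 := by
        rw [← map_mul, h0, map_zero]
      rw [eword, L2a] at he
      have ha0 : (e14 k w).a = 0 := by
        have := congrArg B14.a he
        simp only [B14.mul_a, B14.zero_a] at this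
        rcases mul_eq_zero.mp this with h | h
        · exact absurd h (pow_ne_zero _ Polynomial.X_ne_zero)
        · exact h
      have hmem : e14 k w ∈ Submodule.map (e14 k).toLinearMap T := by
        rw [hT, mapT, spanYX]
        simpa [aL, LinearMap.mem_ker] using ha0
      obtain ⟨u, hu, hue⟩ := hmem
      have : u = w := (e14 k).injective hue
      rwa [← this]
    · intro hw
      refine ⟨1, fun m hm a ha => ?_⟩
      apply (e14 k).injective
      rw [map_mul, map_zero]
      have hmem : e14 k w ∈ Submodule.map (e14 k).toLinearMap T :=
        Submodule.mem_map_of_mem hw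
      rw [hT, mapT, spanYX] at hmem
      exact mulzero2 k _ _ (coeff0_of_memW k m hm ha)
        (by simpa [aL, LinearMap.mem_ker] using hmem)
  · -- infinite dimensional
    intro hfd
    have hv : ∀ i : ℕ, G14 k 1 * (G14 k 0) ^ i ∈ T := fun i => Submodule.subset_span ⟨i, rfl⟩
    have hli : LinearIndependent k (fun i : ℕ => (⟨_, hv i⟩ : T)) := by
      apply LinearIndependent.of_comp T.subtype
      have : ⇑T.subtype ∘ (fun i : ℕ => (⟨_, hv i⟩ : T)) =
          fun i : ℕ => G14 k 1 * (G14 k 0) ^ i := rfl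
      rw [this]
      exact liA k
    have hcard := @LinearIndependent.lt_aleph0_of_finiteDimensional k T _ _ _ ℕ hfd _ hli
    simp [Cardinal.mk_nat] at hcard
  · -- center
    refine le_antisymm (fun z hz => ?_) bot_le
    rw [Subalgebra.mem_center_iff] at hz
    have hb0 : (e14 k z).b = 0 := by
      have h1 := congrArg (e14 k) (hz (G14 k 0))
      rw [map_mul, map_mul, e14_x] at h1
      have := congrArg B14.b h1
      simp only [B14.mul_b, B14.mul_a, Polynomial.coeff_X_zero, Polynomial.C_0, zero_mul,
        B14.zero_b, mul_zero, zero_add, add_zero] at this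
      rcases mul_eq_zero.mp this.symm with h | h
      · exact h
      · exact absurd h Polynomial.X_ne_zero
    have ha0 : (e14 k z).a = C ((e14 k z).a.coeff 0) := by
      have h1 := congrArg (e14 k) (hz (G14 k 1))
      rw [map_mul, map_mul, e14_y] at h1
      have := congrArg B14.b h1
      simp only [B14.mul_b, B14.mul_a, Polynomial.coeff_zero, Polynomial.C_0, zero_mul,
        B14.zero_b, B14.zero_a, mul_zero, mul_one, one_mul, zero_add, add_zero] at this
      exact this
    rw [Algebra.mem_bot]
    refine ⟨(e14 k z).a.coeff 0, ?_⟩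
    apply (e14 k).injective
    rw [AlgEquiv.commutes]
    ext1
    · rw [B14.algebraMap_a]; exact ha0.symm
    · rw [B14.algebraMap_b]; exact hb0.symm

end
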